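/- arXiv:2011.08986 — 2 statements merged into one kernel-verified Lean document; each statement's English description precedes it below -/
import Mathlib

section
/- Let T₁ = (Φ₁,B₁,η₁,h₁) be a stochastic transformation from M to M' and T₂ = (Φ₂,B₂,η₂,h₂) a stochastic transformation from M' to M''. Then for every SDE (μ,σ) on M, E_{T₂}(E_{T₁}(μ,σ)) = E_{T₂∘T₁}(μ,σ), where T₂∘T₁ = (Φ₂∘Φ₁, (B₂∘Φ₁)·B₁, (η₂∘Φ₁)·η₁, √η₁·B₁⁻¹·(h₂∘Φ₁) + h₁). -/
open Matrix

/-- Partial derivative `∂ᵢ f` of a scalar function on `ℝⁿ`. -/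
noncomputable def pd {n : ℕ} (i : Fin n) (f : (Fin n → ℝ) → ℝ) (x : Fin n → ℝ) : ℝ :=
  fderiv ℝ f x (Pi.single i 1)

/-- Action `Y(f) = Yⁱ ∂ᵢ f` of a vector field on a scalar function. -/
noncomputable def vfd {n : ℕ} (Y : (Fin n → ℝ) → Fin n → ℝ)
    (f : (Fin n → ℝ) → ℝ) (x : Fin n → ℝ) : ℝ :=
  ∑ j, Y x j * pd j f x

/-- Infinitesimal generator `L(f) = ½ (σσᵀ)^{ij} ∂ᵢ∂ⱼ f + μⁱ ∂ᵢ f` of the SDE `(μ,σ)`. -/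
noncomputable def gen {n m : ℕ} (μ : (Fin n → ℝ) → Fin n → ℝ)
    (σ : (Fin n → ℝ) → Matrix (Fin n) (Fin m) ℝ)
    (f : (Fin n → ℝ) → ℝ) (x : Fin n → ℝ) : ℝ :=
  (1 / 2) * ∑ i, ∑ j, (∑ α, σ x i α * σ x j α) * pd i (pd j f) x
    + ∑ i, μ x i * pd i f x

/-- Entrywise smoothness of a vector-valued function on a set. -/
def SmoothVec {n k : ℕ} (M : Set (Fin n → ℝ)) (f : (Fin n → ℝ) → Fin k → ℝ) : Prop :=
  ∀ i, ContDiffOn ℝ (⊤ : ℕ∞) (fun x => f x i) M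

/-- Entrywise smoothness of a matrix-valued function on a set. -/
def SmoothMat {n k l : ℕ} (M : Set (Fin n → ℝ))
    (f : (Fin n → ℝ) → Matrix (Fin k) (Fin l) ℝ) : Prop :=
  ∀ i j, ContDiffOn ℝ (⊤ : ℕ∞) (fun x => f x i j) M

/-- The drift of the transformed SDE `E_T(μ,σ)`:
`E_T(μ) = ((1/η)[L(Φ) + ∇Φ·σ·h]) ∘ Φ⁻¹`, where `Ψ = Φ⁻¹`. -/
noncomputable def ETmu {n m : ℕ} (Φ Ψ : (Fin n → ℝ) → Fin n → ℝ)
    (η : (Fin n → ℝ) → ℝ) (h : (Fin n → ℝ) → Fin m → ℝ)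
    (μ : (Fin n → ℝ) → Fin n → ℝ) (σ : (Fin n → ℝ) → Matrix (Fin n) (Fin m) ℝ)
    (y : Fin n → ℝ) : Fin n → ℝ := fun i =>
  (η (Ψ y))⁻¹ * (gen μ σ (fun z => Φ z i) (Ψ y)
    + ∑ j, ∑ α, pd j (fun z => Φ z i) (Ψ y) * σ (Ψ y) j α * h (Ψ y) α)

/-- The diffusion coefficient of the transformed SDE `E_T(μ,σ)`:
`E_T(σ) = ((1/√η)·∇Φ·σ·B⁻¹) ∘ Φ⁻¹`, where `Ψ = Φ⁻¹`. -/
noncomputable def ETsigma {n m : ℕ} (Φ Ψ : (Fin n → ℝ) → Fin n → ℝ)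
    (B : (Fin n → ℝ) → Matrix (Fin m) (Fin m) ℝ) (η : (Fin n → ℝ) → ℝ)
    (σ : (Fin n → ℝ) → Matrix (Fin n) (Fin m) ℝ)
    (y : Fin n → ℝ) : Matrix (Fin n) (Fin m) ℝ :=
  Matrix.of fun i α =>
    (Real.sqrt (η (Ψ y)))⁻¹ *
      ∑ j, ∑ β, pd j (fun z => Φ z i) (Ψ y) * σ (Ψ y) j β * (B (Ψ y))⁻¹ β α


section Helpers

lemma pd_congr {n : ℕ} {i : Fin n} {f g : (Fin n → ℝ) → ℝ} {x : Fin n → ℝ}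
    (h : f =ᶠ[nhds x] g) : pd i f x = pd i g x := by
  unfold pd; rw [Filter.EventuallyEq.fderiv_eq h]

lemma clm_apply_sum {n : ℕ} (L : (Fin n → ℝ) →L[ℝ] ℝ) (v : Fin n → ℝ) :
    L v = ∑ j, v j * L (Pi.single j 1) := by
  have hv : v = ∑ j, v j • (Pi.single j 1 : Fin n → ℝ) := by
    ext k; rw [Finset.sum_apply]; simp [Pi.single_apply]
  conv_lhs => rw [hv]
  rw [map_sum]
  simp [smul_eq_mul]

lemma pd_contDiffOn {n : ℕ} {M : Set (Fin n → ℝ)} (hM : IsOpen M)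
    {f : (Fin n → ℝ) → ℝ} (hf : ContDiffOn ℝ (⊤ : ℕ∞) f M) (i : Fin n) :
    ContDiffOn ℝ (⊤ : ℕ∞) (pd i f) M := by
  have h1 : ContDiffOn ℝ (⊤ : ℕ∞) (fderiv ℝ f) M :=
    hf.fderiv_of_isOpen hM (le_of_eq rfl)
  exact (ContinuousLinearMap.apply ℝ ℝ (Pi.single i (1:ℝ) : Fin n → ℝ)).contDiff.comp_contDiffOn h1

lemma diffAt_of_on {n : ℕ} {M : Set (Fin n → ℝ)} (hM : IsOpen M)
    {f : (Fin n → ℝ) → ℝ} (hf : ContDiffOn ℝ (⊤ : ℕ∞) f M) {x} (hx : x ∈ M) :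
    DifferentiableAt ℝ f x :=
  (hf.contDiffAt (hM.mem_nhds hx)).differentiableAt (by simp)

lemma diffAt_vec {n k : ℕ} {M : Set (Fin n → ℝ)} (hM : IsOpen M)
    {Φ : (Fin n → ℝ) → Fin k → ℝ} (hΦ : SmoothVec M Φ) {x} (hx : x ∈ M) :
    DifferentiableAt ℝ Φ x :=
  differentiableAt_pi.2 fun j => diffAt_of_on hM (hΦ j) hx

lemma pd_comp {n : ℕ} {M M' : Set (Fin n → ℝ)} (hM : IsOpen M) (hM' : IsOpen M')
    {Φ : (Fin n → ℝ) → Fin n → ℝ} (hΦ : SmoothVec M Φ) (hmap : Set.MapsTo Φ M M')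
    {g : (Fin n → ℝ) → ℝ} (hg : ContDiffOn ℝ (⊤ : ℕ∞) g M')
    {x} (hx : x ∈ M) (k : Fin n) :
    pd k (fun z => g (Φ z)) x = ∑ j, pd j g (Φ x) * pd k (fun z => Φ z j) x := by
  have hΦd : DifferentiableAt ℝ Φ x := diffAt_vec hM hΦ hx
  have hgd : DifferentiableAt ℝ g (Φ x) := diffAt_of_on hM' hg (hmap hx)
  have hcomp : fderiv ℝ (fun z => g (Φ z)) x = (fderiv ℝ g (Φ x)).comp (fderiv ℝ Φ x) :=
    fderiv_comp x hgd hΦd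
  unfold pd
  rw [hcomp]
  simp only [ContinuousLinearMap.comp_apply]
  rw [clm_apply_sum (fderiv ℝ g (Φ x)) (fderiv ℝ Φ x (Pi.single k 1))]
  apply Finset.sum_congr rfl
  intro j _
  rw [mul_comm]
  congr 1
  rw [fderiv_pi (fun j => diffAt_of_on hM (hΦ j) hx)]
  rfl

lemma pd_mul {n : ℕ} {f g : (Fin n → ℝ) → ℝ} {x : Fin n → ℝ}
    (hf : DifferentiableAt ℝ f x) (hg : DifferentiableAt ℝ g x) (i : Fin n) :
    pd i (fun z => f z * g z) x = pd i f x * g x + f x * pd i g x := by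
  unfold pd
  rw [fderiv_fun_mul hf hg]
  simp [smul_eq_mul]; ring

lemma pd_sum {n k : ℕ} {F : Fin k → (Fin n → ℝ) → ℝ} {x : Fin n → ℝ}
    (hF : ∀ j, DifferentiableAt ℝ (F j) x) (i : Fin n) :
    pd i (fun z => ∑ j, F j z) x = ∑ j, pd i (F j) x := by
  unfold pd
  rw [fderiv_fun_sum fun j _ => hF j]
  simp

lemma pd_pd_comp {n : ℕ} {M M' : Set (Fin n → ℝ)} (hM : IsOpen M) (hM' : IsOpen M')
    {Φ : (Fin n → ℝ) → Fin n → ℝ} (hΦ : SmoothVec M Φ) (hmap : Set.MapsTo Φ M M')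
    {g : (Fin n → ℝ) → ℝ} (hg : ContDiffOn ℝ (⊤ : ℕ∞) g M')
    {x} (hx : x ∈ M) (k l : Fin n) :
    pd k (pd l (fun z => g (Φ z))) x =
      ∑ p, (∑ j, pd j (pd p g) (Φ x) * pd k (fun z => Φ z j) x) * pd l (fun z => Φ z p) x
      + ∑ p, pd p g (Φ x) * pd k (pd l (fun z => Φ z p)) x := by
  have hstep : pd k (pd l (fun z => g (Φ z))) x
      = pd k (fun z => ∑ p, pd p g (Φ z) * pd l (fun w => Φ w p) z) x := by
    apply pd_congr
    filter_upwards [hM.mem_nhds hx] with z hz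
    exact pd_comp hM hM' hΦ hmap hg hz l
  rw [hstep]
  have hdc : ∀ p : Fin n, DifferentiableAt ℝ (fun z => pd p g (Φ z)) x := fun p =>
    (diffAt_of_on hM' (pd_contDiffOn hM' hg p) (hmap hx)).comp x (diffAt_vec hM hΦ hx)
  have hdl : ∀ p : Fin n, DifferentiableAt ℝ (pd l fun w => Φ w p) x := fun p =>
    diffAt_of_on hM (pd_contDiffOn hM (hΦ p) l) hx
  rw [pd_sum (fun p => (hdc p).fun_mul (hdl p)) k]
  rw [Finset.sum_add_distrib.symm]
  apply Finset.sum_congr rfl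
  intro p _
  rw [pd_mul (hdc p) (hdl p) k, pd_comp hM hM' hΦ hmap (pd_contDiffOn hM' hg p) hx k]

lemma reorder4 {a b c d : Type*} [Fintype a] [Fintype b] [Fintype c] [Fintype d]
    (F : a → b → c → d → ℝ) :
    ∑ j, ∑ β, ∑ k, ∑ γ, F j β k γ = ∑ k, ∑ γ, ∑ j, ∑ β, F j β k γ := by
  calc ∑ j, ∑ β, ∑ k, ∑ γ, F j β k γ
      = ∑ j, ∑ k, ∑ β, ∑ γ, F j β k γ :=
        Finset.sum_congr rfl fun j _ => Finset.sum_comm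
    _ = ∑ k, ∑ j, ∑ β, ∑ γ, F j β k γ := Finset.sum_comm
    _ = ∑ k, ∑ j, ∑ γ, ∑ β, F j β k γ :=
        Finset.sum_congr rfl fun k _ => Finset.sum_congr rfl fun j _ => Finset.sum_comm
    _ = ∑ k, ∑ γ, ∑ j, ∑ β, F j β k γ :=
        Finset.sum_congr rfl fun k _ => Finset.sum_comm

lemma sigma_alg {n m : ℕ} (c₁ c₂ : ℝ) (A : Fin n → ℝ) (C : Fin n → Fin n → ℝ)
    (S : Fin n → Fin m → ℝ) (P Q : Fin m → Fin m → ℝ) (α : Fin m) :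
    c₂ * ∑ j, ∑ β, A j * (c₁ * ∑ k, ∑ γ, C k j * S k γ * P γ β) * Q β α
    = c₂ * c₁ * ∑ k, ∑ β, (∑ j, A j * C k j) * S k β * (∑ γ, P β γ * Q γ α) := by
  have L : c₂ * ∑ j, ∑ β, A j * (c₁ * ∑ k, ∑ γ, C k j * S k γ * P γ β) * Q β α
      = ∑ j, ∑ β, ∑ k, ∑ γ, c₂ * c₁ * (A j * C k j * S k γ * P γ β * Q β α) := by
    simp only [Finset.mul_sum, Finset.sum_mul]
    refine Finset.sum_congr rfl fun j _ => Finset.sum_congr rfl fun β _ =>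
      Finset.sum_congr rfl fun k _ => Finset.sum_congr rfl fun γ _ => by ring
  have R : c₂ * c₁ * ∑ k, ∑ β, (∑ j, A j * C k j) * S k β * (∑ γ, P β γ * Q γ α)
      = ∑ k, ∑ γ, ∑ j, ∑ β, c₂ * c₁ * (A j * C k j * S k γ * P γ β * Q β α) := by
    simp only [Finset.mul_sum, Finset.sum_mul]
    refine Finset.sum_congr rfl fun k _ => Finset.sum_congr rfl fun β _ => ?_
    rw [Finset.sum_comm]
    refine Finset.sum_congr rfl fun j _ => Finset.sum_congr rfl fun γ _ => by ring
  rw [L, R, reorder4]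

lemma orth_inv {m : ℕ} {B : Matrix (Fin m) (Fin m) ℝ} (h : B * Bᵀ = 1) (γ δ : Fin m) :
    ∑ α, B⁻¹ γ α * B⁻¹ δ α = if γ = δ then 1 else 0 := by
  have hinv : B⁻¹ = Bᵀ := Matrix.inv_eq_right_inv h
  have h2 : Bᵀ * B = 1 := mul_eq_one_comm.mp h
  calc ∑ α, B⁻¹ γ α * B⁻¹ δ α = (B⁻¹ * (B⁻¹)ᵀ) γ δ := by
        simp [Matrix.mul_apply, Matrix.transpose_apply]
    _ = (Bᵀ * B) γ δ := by rw [hinv, Matrix.transpose_transpose]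
    _ = _ := by rw [h2]; simp [Matrix.one_apply]

lemma reorder3 {a b c : Type*} [Fintype a] [Fintype b] [Fintype c] (F : a → b → c → ℝ) :
    ∑ x, ∑ y, ∑ z, F x y z = ∑ y, ∑ z, ∑ x, F x y z := by
  rw [Finset.sum_comm]
  exact Finset.sum_congr rfl fun y _ => Finset.sum_comm

lemma sum_factor {a : Type*} [Fintype a] (c : ℝ) {f g : a → ℝ} (h : ∀ x, f x = c * g x) :
    ∑ x, f x = c * ∑ x, g x := by
  rw [Finset.mul_sum]
  exact Finset.sum_congr rfl fun x _ => h x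

lemma sum_factor' {a : Type*} [Fintype a] (c : ℝ) {f g : a → ℝ} (h : ∀ x, f x = g x * c) :
    ∑ x, f x = (∑ x, g x) * c := by
  rw [Finset.sum_mul]
  exact Finset.sum_congr rfl fun x _ => h x

lemma sum_contract {m : ℕ} {P : Fin m → Fin m → ℝ}
    (horth : ∀ γ δ, ∑ α, P γ α * P δ α = if γ = δ then 1 else 0) (u v : Fin m → ℝ) :
    ∑ α, (∑ γ, u γ * P γ α) * (∑ δ, v δ * P δ α) = ∑ γ, u γ * v γ := by
  have h1 : ∀ α, (∑ γ, u γ * P γ α) * (∑ δ, v δ * P δ α)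
      = ∑ γ, ∑ δ, u γ * v δ * (P γ α * P δ α) := by
    intro α
    rw [Finset.sum_mul]
    refine Finset.sum_congr rfl fun γ _ => ?_
    rw [Finset.mul_sum]
    exact Finset.sum_congr rfl fun δ _ => by ring
  simp only [h1]
  rw [reorder3]
  refine Finset.sum_congr rfl fun γ _ => ?_
  have h2 : ∀ δ, ∑ α, u γ * v δ * (P γ α * P δ α) = u γ * v δ * (if γ = δ then 1 else 0) := by
    intro δ; rw [← Finset.mul_sum, horth]
  simp only [h2, mul_ite, mul_one, mul_zero]
  simp


lemma mu_alg {n m : ℕ} (e₁ e₂ s : ℝ) (hs : s * s = e₁) (hs0 : s ≠ 0)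
    (A : Fin n → ℝ) (D2 : Fin n → Fin n → ℝ) (C : Fin n → Fin n → ℝ)
    (C2 : Fin n → Fin n → Fin n → ℝ) (S : Fin n → Fin m → ℝ) (P : Fin m → Fin m → ℝ)
    (horth : ∀ γ δ, ∑ α, P γ α * P δ α = if γ = δ then 1 else 0)
    (h1 h2v : Fin m → ℝ) (mu : Fin n → ℝ) :
    e₂⁻¹ * ((1/2) * (∑ j, ∑ p, (∑ α, (s⁻¹ * ∑ k, ∑ γ, C k j * S k γ * P γ α)
            * (s⁻¹ * ∑ k, ∑ γ, C k p * S k γ * P γ α)) * D2 j p)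
        + (∑ j, (e₁⁻¹ * ((1/2) * (∑ k, ∑ l, (∑ α, S k α * S l α) * C2 k l j)
            + ∑ k, mu k * C k j
            + ∑ k, ∑ α, C k j * S k α * h1 α)) * A j)
        + ∑ j, ∑ α, A j * (s⁻¹ * ∑ k, ∑ γ, C k j * S k γ * P γ α) * h2v α)
    = (e₂ * e₁)⁻¹ * ((1/2) * (∑ k, ∑ l, (∑ α, S k α * S l α) *
            (∑ p, (∑ j, D2 j p * C k j) * C l p + ∑ p, A p * C2 k l p))
        + ∑ k, mu k * (∑ j, A j * C k j)
        + ∑ k, ∑ α, (∑ j, A j * C k j) * S k α * (s * (∑ β, P α β * h2v β) + h1 α)) := by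
  have he0 : e₁ ≠ 0 := by rw [← hs]; exact mul_ne_zero hs0 hs0
  have hsinv : s⁻¹ = e₁⁻¹ * s := by
    rw [← hs, mul_inv, mul_assoc, inv_mul_cancel₀ hs0, mul_one]
  have hss : s⁻¹ * s⁻¹ = e₁⁻¹ := by rw [← hs, mul_inv]
  have hI : ∀ j p, (∑ α, (s⁻¹ * ∑ k, ∑ γ, C k j * S k γ * P γ α)
      * (s⁻¹ * ∑ k, ∑ γ, C k p * S k γ * P γ α))
      = e₁⁻¹ * ∑ k, ∑ l, (∑ α, S k α * S l α) * (C k j * C l p) := by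
    intro j p
    have fac : ∀ (q : Fin n) (α : Fin m), (∑ k, ∑ γ, C k q * S k γ * P γ α)
        = ∑ γ, (∑ k, C k q * S k γ) * P γ α := by
      intro q α
      rw [Finset.sum_comm]
      exact Finset.sum_congr rfl fun γ _ => (Finset.sum_mul _ _ _).symm
    have step1 : (∑ α, (s⁻¹ * ∑ k, ∑ γ, C k j * S k γ * P γ α)
        * (s⁻¹ * ∑ k, ∑ γ, C k p * S k γ * P γ α))
        = s⁻¹ * s⁻¹ * ∑ α, (∑ γ, (∑ k, C k j * S k γ) * P γ α)
            * (∑ δ, (∑ l, C l p * S l δ) * P δ α) := by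
      refine sum_factor (s⁻¹ * s⁻¹) fun α => ?_
      rw [fac j α, fac p α]; ring
    rw [step1, sum_contract horth (fun γ => ∑ k, C k j * S k γ) (fun δ => ∑ l, C l p * S l δ),
      hss]
    congr 1
    have expand : ∀ γ : Fin m, (∑ k, C k j * S k γ) * (∑ l, C l p * S l γ)
        = ∑ k, ∑ l, (C k j * S k γ) * (C l p * S l γ) :=
      fun γ => Fintype.sum_mul_sum _ _
    simp only [expand]
    rw [reorder3]
    refine Finset.sum_congr rfl fun k _ => ?_
    refine Finset.sum_congr rfl fun l _ => ?_
    exact sum_factor' (C k j * C l p) (g := fun γ => S k γ * S l γ) fun γ => by ring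
  have t1 : (1/2) * (∑ j, ∑ p, (∑ α, (s⁻¹ * ∑ k, ∑ γ, C k j * S k γ * P γ α)
        * (s⁻¹ * ∑ k, ∑ γ, C k p * S k γ * P γ α)) * D2 j p)
      = e₁⁻¹ * ((1/2) * ∑ j, ∑ p, ∑ k, ∑ l, (∑ α, S k α * S l α) * (C k j * C l p) * D2 j p) := by
    simp only [hI]
    rw [show (∑ j, ∑ p, (e₁⁻¹ * ∑ k, ∑ l, (∑ α, S k α * S l α) * (C k j * C l p)) * D2 j p)
        = e₁⁻¹ * ∑ j, ∑ p, ∑ k, ∑ l, (∑ α, S k α * S l α) * (C k j * C l p) * D2 j p from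
      sum_factor e₁⁻¹ fun j => sum_factor e₁⁻¹ fun p => by
        rw [show (∑ k, ∑ l, (∑ α, S k α * S l α) * (C k j * C l p) * D2 j p)
            = (∑ k, ∑ l, (∑ α, S k α * S l α) * (C k j * C l p)) * D2 j p from
          sum_factor' (D2 j p) fun k => sum_factor' (D2 j p) fun l => rfl]
        ring]
    ring
  have t2 : (∑ j, (e₁⁻¹ * ((1/2) * (∑ k, ∑ l, (∑ α, S k α * S l α) * C2 k l j)
        + ∑ k, mu k * C k j + ∑ k, ∑ α, C k j * S k α * h1 α)) * A j)
      = e₁⁻¹ * (((1/2) * ∑ j, ∑ k, ∑ l, (∑ α, S k α * S l α) * C2 k l j * A j) + (∑ j, ∑ k, mu k * C k j * A j) + (∑ j, ∑ k, ∑ α, C k j * S k α * h1 α * A j)) := by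
    rw [show (∑ j, (e₁⁻¹ * ((1/2) * (∑ k, ∑ l, (∑ α, S k α * S l α) * C2 k l j)
          + ∑ k, mu k * C k j + ∑ k, ∑ α, C k j * S k α * h1 α)) * A j)
        = e₁⁻¹ * ∑ j, ((1/2) * (∑ k, ∑ l, (∑ α, S k α * S l α) * C2 k l j)
          + ∑ k, mu k * C k j + ∑ k, ∑ α, C k j * S k α * h1 α) * A j from
      sum_factor e₁⁻¹ fun j => by ring]
    congr 1
    simp only [add_mul, Finset.sum_add_distrib]
    congr 1
    · congr 1
      · rw [show ((1/2) * ∑ j, ∑ k, ∑ l, (∑ α, S k α * S l α) * C2 k l j * A j) = ∑ j, (1/2) * (∑ k, ∑ l, (∑ α, S k α * S l α) * C2 k l j * A j) from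
          (sum_factor (1/2:ℝ) fun j => rfl).symm]
        refine Finset.sum_congr rfl fun j _ => ?_
        rw [show (∑ k, ∑ l, (∑ α, S k α * S l α) * C2 k l j * A j)
            = (∑ k, ∑ l, (∑ α, S k α * S l α) * C2 k l j) * A j from
          sum_factor' (A j) fun k => sum_factor' (A j) fun l => rfl]
        ring
      · exact Finset.sum_congr rfl fun j _ => Finset.sum_mul _ _ _
    · refine Finset.sum_congr rfl fun j _ => ?_
      rw [Finset.sum_mul]
      refine Finset.sum_congr rfl fun k _ => ?_
      exact Finset.sum_mul _ _ _
  have t3 : (∑ j, ∑ α, A j * (s⁻¹ * ∑ k, ∑ γ, C k j * S k γ * P γ α) * h2v α)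
      = e₁⁻¹ * (s * ∑ j, ∑ α, ∑ k, ∑ γ, A j * C k j * S k γ * P γ α * h2v α) := by
    rw [hsinv, ← mul_assoc]
    refine sum_factor (e₁⁻¹ * s) fun j => sum_factor (e₁⁻¹ * s) fun α => ?_
    rw [show (∑ k, ∑ γ, A j * C k j * S k γ * P γ α * h2v α)
        = (∑ k, ∑ γ, C k j * S k γ * P γ α) * (A j * h2v α) from
      sum_factor' (A j * h2v α) fun k => sum_factor' (A j * h2v α) fun γ => by ring]
    ring
  have r1 : (1/2) * (∑ k, ∑ l, (∑ α, S k α * S l α) *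
        (∑ p, (∑ j, D2 j p * C k j) * C l p + ∑ p, A p * C2 k l p))
      = ((1/2) * ∑ j, ∑ p, ∑ k, ∑ l, (∑ α, S k α * S l α) * (C k j * C l p) * D2 j p) + ((1/2) * ∑ j, ∑ k, ∑ l, (∑ α, S k α * S l α) * C2 k l j * A j) := by
    have split : ∀ (k l : Fin n), (∑ α, S k α * S l α) *
          (∑ p, (∑ j, D2 j p * C k j) * C l p + ∑ p, A p * C2 k l p)
        = (∑ j, ∑ p, (∑ α, S k α * S l α) * (C k j * C l p) * D2 j p)
          + ∑ p, (∑ α, S k α * S l α) * C2 k l p * A p := by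
      intro k l
      rw [mul_add]
      congr 1
      · calc (∑ α, S k α * S l α) * (∑ p, (∑ j, D2 j p * C k j) * C l p)
            = ∑ p, (∑ α, S k α * S l α) * ((∑ j, D2 j p * C k j) * C l p) := Finset.mul_sum _ _ _
          _ = ∑ p, ∑ j, (∑ α, S k α * S l α) * (C k j * C l p) * D2 j p := by
              refine Finset.sum_congr rfl fun p _ => ?_
              rw [show (∑ j, (∑ α, S k α * S l α) * (C k j * C l p) * D2 j p)
                  = (∑ j, D2 j p * C k j) * ((∑ α, S k α * S l α) * C l p) from
                sum_factor' ((∑ α, S k α * S l α) * C l p) fun j => by ring]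
              ring
          _ = ∑ j, ∑ p, (∑ α, S k α * S l α) * (C k j * C l p) * D2 j p := Finset.sum_comm
      · calc (∑ α, S k α * S l α) * (∑ p, A p * C2 k l p)
            = ∑ p, (∑ α, S k α * S l α) * (A p * C2 k l p) := Finset.mul_sum _ _ _
          _ = ∑ p, (∑ α, S k α * S l α) * C2 k l p * A p := Finset.sum_congr rfl fun p _ => by ring
    simp only [split]
    have d1 : ∀ k : Fin n, (∑ l, ((∑ j, ∑ p, (∑ α, S k α * S l α) * (C k j * C l p) * D2 j p)
          + ∑ p, (∑ α, S k α * S l α) * C2 k l p * A p))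
        = (∑ l, ∑ j, ∑ p, (∑ α, S k α * S l α) * (C k j * C l p) * D2 j p)
          + ∑ l, ∑ p, (∑ α, S k α * S l α) * C2 k l p * A p := fun k => Finset.sum_add_distrib
    simp only [d1]
    rw [Finset.sum_add_distrib, mul_add]
    congr 1
    · congr 1
      exact (reorder4 fun j p k l => (∑ α, S k α * S l α) * (C k j * C l p) * D2 j p).symm
    · congr 1
      exact (reorder3 fun j k l => (∑ α, S k α * S l α) * C2 k l j * A j).symm
  have r2 : (∑ k, mu k * (∑ j, A j * C k j)) = (∑ j, ∑ k, mu k * C k j * A j) := by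
    calc (∑ k, mu k * (∑ j, A j * C k j))
        = ∑ k, ∑ j, mu k * (A j * C k j) :=
          Finset.sum_congr rfl fun k _ => Finset.mul_sum _ _ _
      _ = ∑ j, ∑ k, mu k * (A j * C k j) := Finset.sum_comm
      _ = ∑ j, ∑ k, mu k * C k j * A j :=
          Finset.sum_congr rfl fun j _ => Finset.sum_congr rfl fun k _ => by ring
  have r3 : (∑ k, ∑ α, (∑ j, A j * C k j) * S k α * (s * (∑ β, P α β * h2v β) + h1 α))
      = (s * ∑ j, ∑ α, ∑ k, ∑ γ, A j * C k j * S k γ * P γ α * h2v α) + (∑ j, ∑ k, ∑ α, C k j * S k α * h1 α * A j) := by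
    have expand : ∀ (k : Fin n) (α : Fin m),
        (∑ j, A j * C k j) * S k α * (s * (∑ β, P α β * h2v β) + h1 α)
        = s * (∑ j, ∑ β, A j * C k j * S k α * P α β * h2v β)
          + ∑ j, C k j * S k α * h1 α * A j := by
      intro k α
      rw [mul_add]
      congr 1
      · rw [show (∑ j, ∑ β, A j * C k j * S k α * P α β * h2v β)
            = (∑ j, A j * C k j) * (S k α * (∑ β, P α β * h2v β)) from
          sum_factor' (S k α * (∑ β, P α β * h2v β)) fun j =>
            ((sum_factor (A j * C k j * S k α) (g := fun β => P α β * h2v β) fun β => by ring).trans (by ring))]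
        ring
      · rw [show (∑ j, C k j * S k α * h1 α * A j)
            = (∑ j, A j * C k j) * (S k α * h1 α) from
          sum_factor' (S k α * h1 α) fun j => by ring]
        ring
    simp only [expand]
    have d2 : ∀ k : Fin n, (∑ α, (s * (∑ j, ∑ β, A j * C k j * S k α * P α β * h2v β)
          + ∑ j, C k j * S k α * h1 α * A j))
        = (∑ α, s * (∑ j, ∑ β, A j * C k j * S k α * P α β * h2v β))
          + ∑ α, ∑ j, C k j * S k α * h1 α * A j := fun k => Finset.sum_add_distrib
    simp only [d2]
    rw [Finset.sum_add_distrib]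
    congr 1
    · rw [show (∑ k, ∑ α, s * (∑ j, ∑ β, A j * C k j * S k α * P α β * h2v β))
          = s * ∑ k, ∑ α, ∑ j, ∑ β, A j * C k j * S k α * P α β * h2v β from
        sum_factor s fun k => sum_factor s fun α => rfl]
      congr 1
      exact (reorder4 fun j α k γ => A j * C k j * S k γ * P γ α * h2v α).symm
    · exact (reorder3 fun j k α => C k j * S k α * h1 α * A j).symm
  rw [mul_inv, mul_assoc]
  congr 1
  rw [t1, t2, t3, r1, r2, r3]
  ring

end Helpers

/-- Composition of stochastic transformations at the level of SDEs:
`E_{T₂}(E_{T₁}(μ,σ)) = E_{T₂∘T₁}(μ,σ)`, where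
`T₂∘T₁ = (Φ₂∘Φ₁, (B₂∘Φ₁)·B₁, (η₂∘Φ₁)·η₁, √η₁·B₁⁻¹·(h₂∘Φ₁) + h₁)`. -/
theorem statement2 {n m : ℕ}
    (M M' M'' : Set (Fin n → ℝ)) (hM : IsOpen M) (hM' : IsOpen M') (hM'' : IsOpen M'')
    (μ : (Fin n → ℝ) → Fin n → ℝ) (σ : (Fin n → ℝ) → Matrix (Fin n) (Fin m) ℝ)
    (hμ : SmoothVec M μ) (hσ : SmoothMat M σ)
    -- T₁ = (Φ₁, B₁, η₁, h₁) is a stochastic transformation from M to M', with Ψ₁ = Φ₁⁻¹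
    (Φ₁ Ψ₁ : (Fin n → ℝ) → Fin n → ℝ)
    (B₁ : (Fin n → ℝ) → Matrix (Fin m) (Fin m) ℝ)
    (η₁ : (Fin n → ℝ) → ℝ) (h₁ : (Fin n → ℝ) → Fin m → ℝ)
    (hΦ₁map : Set.MapsTo Φ₁ M M') (hΨ₁map : Set.MapsTo Ψ₁ M' M)
    (hΦ₁inv : ∀ x ∈ M, Ψ₁ (Φ₁ x) = x) (hΨ₁inv : ∀ y ∈ M', Φ₁ (Ψ₁ y) = y)
    (hΦ₁s : SmoothVec M Φ₁) (hΨ₁s : SmoothVec M' Ψ₁)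
    (hB₁s : SmoothMat M B₁) (hη₁s : ContDiffOn ℝ (⊤ : ℕ∞) η₁ M) (hh₁s : SmoothVec M h₁)
    (hSO₁ : ∀ x ∈ M, B₁ x * (B₁ x)ᵀ = 1 ∧ (B₁ x).det = 1) (hpos₁ : ∀ x ∈ M, 0 < η₁ x)
    -- T₂ = (Φ₂, B₂, η₂, h₂) is a stochastic transformation from M' to M'', with Ψ₂ = Φ₂⁻¹
    (Φ₂ Ψ₂ : (Fin n → ℝ) → Fin n → ℝ)
    (B₂ : (Fin n → ℝ) → Matrix (Fin m) (Fin m) ℝ)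
    (η₂ : (Fin n → ℝ) → ℝ) (h₂ : (Fin n → ℝ) → Fin m → ℝ)
    (hΦ₂map : Set.MapsTo Φ₂ M' M'') (hΨ₂map : Set.MapsTo Ψ₂ M'' M')
    (hΦ₂inv : ∀ x ∈ M', Ψ₂ (Φ₂ x) = x) (hΨ₂inv : ∀ y ∈ M'', Φ₂ (Ψ₂ y) = y)
    (hΦ₂s : SmoothVec M' Φ₂) (hΨ₂s : SmoothVec M'' Ψ₂)
    (hB₂s : SmoothMat M' B₂) (hη₂s : ContDiffOn ℝ (⊤ : ℕ∞) η₂ M') (hh₂s : SmoothVec M' h₂)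
    (hSO₂ : ∀ x ∈ M', B₂ x * (B₂ x)ᵀ = 1 ∧ (B₂ x).det = 1) (hpos₂ : ∀ x ∈ M', 0 < η₂ x) :
    ∀ y ∈ M'',
      (∀ i, ETmu Φ₂ Ψ₂ η₂ h₂ (ETmu Φ₁ Ψ₁ η₁ h₁ μ σ) (ETsigma Φ₁ Ψ₁ B₁ η₁ σ) y i =
        ETmu (fun x => Φ₂ (Φ₁ x)) (fun z => Ψ₁ (Ψ₂ z))
          (fun x => η₂ (Φ₁ x) * η₁ x)
          (fun x => Real.sqrt (η₁ x) • ((B₁ x)⁻¹ *ᵥ h₂ (Φ₁ x)) + h₁ x) μ σ y i) ∧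
      (∀ i α, ETsigma Φ₂ Ψ₂ B₂ η₂ (ETsigma Φ₁ Ψ₁ B₁ η₁ σ) y i α =
        ETsigma (fun x => Φ₂ (Φ₁ x)) (fun z => Ψ₁ (Ψ₂ z))
          (fun x => B₂ (Φ₁ x) * B₁ x) (fun x => η₂ (Φ₁ x) * η₁ x) σ y i α) := by
  
  intro y hy
  have hx' : Ψ₂ y ∈ M' := hΨ₂map hy
  have hx : Ψ₁ (Ψ₂ y) ∈ M := hΨ₁map hx'
  have hΦx : Φ₁ (Ψ₁ (Ψ₂ y)) = Ψ₂ y := hΨ₁inv _ hx'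
  have he₁ : 0 < η₁ (Ψ₁ (Ψ₂ y)) := hpos₁ _ hx
  have he₂ : 0 < η₂ (Ψ₂ y) := hpos₂ _ hx'
  have hch : ∀ (i k : Fin n), pd k (fun z => Φ₂ (Φ₁ z) i) (Ψ₁ (Ψ₂ y))
      = ∑ j, pd j (fun w => Φ₂ w i) (Ψ₂ y) * pd k (fun z => Φ₁ z j) (Ψ₁ (Ψ₂ y)) := by
    intro i k
    have h := pd_comp hM hM' hΦ₁s hΦ₁map (hΦ₂s i) hx k
    rw [hΦx] at h
    exact h
  constructor
  · intro i
    have hch2 : ∀ k l : Fin n, pd k (pd l (fun z => Φ₂ (Φ₁ z) i)) (Ψ₁ (Ψ₂ y))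
        = ∑ p, (∑ j, pd j (pd p (fun w => Φ₂ w i)) (Ψ₂ y)
              * pd k (fun z => Φ₁ z j) (Ψ₁ (Ψ₂ y))) * pd l (fun z => Φ₁ z p) (Ψ₁ (Ψ₂ y))
          + ∑ p, pd p (fun w => Φ₂ w i) (Ψ₂ y) * pd k (pd l (fun z => Φ₁ z p)) (Ψ₁ (Ψ₂ y)) := by
      intro k l
      have h := pd_pd_comp hM hM' hΦ₁s hΦ₁map (hΦ₂s i) hx k l
      rw [hΦx] at h
      exact h
    simp only [ETmu, ETsigma, gen, Matrix.of_apply]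
    rw [hΦx]
    simp only [Pi.add_apply, Pi.smul_apply, smul_eq_mul, Matrix.mulVec, dotProduct,
      hch, hch2]
    exact mu_alg (η₁ (Ψ₁ (Ψ₂ y))) (η₂ (Ψ₂ y)) (Real.sqrt (η₁ (Ψ₁ (Ψ₂ y))))
      (Real.mul_self_sqrt he₁.le) (Real.sqrt_ne_zero'.mpr he₁)
      (fun j => pd j (fun w => Φ₂ w i) (Ψ₂ y))
      (fun j p => pd j (pd p (fun w => Φ₂ w i)) (Ψ₂ y))
      (fun k j => pd k (fun z => Φ₁ z j) (Ψ₁ (Ψ₂ y)))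
      (fun k l p => pd k (pd l (fun z => Φ₁ z p)) (Ψ₁ (Ψ₂ y)))
      (fun k α => σ (Ψ₁ (Ψ₂ y)) k α)
      (fun γ α => (B₁ (Ψ₁ (Ψ₂ y)))⁻¹ γ α)
      (orth_inv (hSO₁ _ hx).1)
      (fun α => h₁ (Ψ₁ (Ψ₂ y)) α) (fun α => h₂ (Ψ₂ y) α) (fun k => μ (Ψ₁ (Ψ₂ y)) k)
  · intro i α
    simp only [ETsigma, Matrix.of_apply]
    rw [hΦx]
    rw [Real.sqrt_mul he₂.le, mul_inv, Matrix.mul_inv_rev]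
    simp only [Matrix.mul_apply, hch]
    exact sigma_alg _ _ _ _ _ _ _ α
end

section
/- Let Φ₁: M → M' be a smooth diffeomorphism between open subsets of ℝⁿ, let B₁: M → SO(m) and η₁: M → ℝ₊ be smooth, let σ: M → Mat(n,m) be smooth, and let 𝔥₁ ∈ C^∞(M), 𝔥₂ ∈ C^∞(M'). Define σ̃ = ((1/√η₁)·∇Φ₁·σ·B₁⁻¹)∘Φ₁⁻¹ (the transformed diffusion coefficient), h₁ = σᵀ·∇𝔥₁ on M and h₂ = σ̃ᵀ·∇𝔥₂ on M'. Then the composed Girsanov component ĥ = √η₁·B₁⁻¹·(h₂∘Φ₁) + h₁ satisfies ĥ = σᵀ·∇(𝔥₂∘Φ₁ + 𝔥₁) on M. (Hence the composition of quasi Doob transformations is a quasi Doob transformation, characterized by the function 𝔥₂∘Φ₁ + 𝔥₁.) -/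
open Matrix

theorem statement9' {n m : ℕ}
    (M M' : Set (Fin n → ℝ)) (hM : IsOpen M) (hM' : IsOpen M')
    (σ : (Fin n → ℝ) → Matrix (Fin n) (Fin m) ℝ) (hσ : SmoothMat M σ)
    (Φ₁ Ψ₁ : (Fin n → ℝ) → Fin n → ℝ)
    (B₁ : (Fin n → ℝ) → Matrix (Fin m) (Fin m) ℝ) (η₁ : (Fin n → ℝ) → ℝ)
    (hΦ₁map : Set.MapsTo Φ₁ M M') (hΨ₁map : Set.MapsTo Ψ₁ M' M)
    (hΦ₁inv : ∀ x ∈ M, Ψ₁ (Φ₁ x) = x) (hΨ₁inv : ∀ y ∈ M', Φ₁ (Ψ₁ y) = y)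
    (hΦ₁s : SmoothVec M Φ₁) (hΨ₁s : SmoothVec M' Ψ₁)
    (hB₁s : SmoothMat M B₁) (hη₁s : ContDiffOn ℝ (⊤ : ℕ∞) η₁ M)
    (hSO₁ : ∀ x ∈ M, B₁ x * (B₁ x)ᵀ = 1 ∧ (B₁ x).det = 1) (hpos₁ : ∀ x ∈ M, 0 < η₁ x)
    (𝔥₁ 𝔥₂ : (Fin n → ℝ) → ℝ)
    (h𝔥₁ : ContDiffOn ℝ (⊤ : ℕ∞) 𝔥₁ M) (h𝔥₂ : ContDiffOn ℝ (⊤ : ℕ∞) 𝔥₂ M') :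
    ∀ x ∈ M, ∀ α,
      Real.sqrt (η₁ x) *
          (∑ β, (B₁ x)⁻¹ α β *
            (∑ i, ETsigma Φ₁ Ψ₁ B₁ η₁ σ (Φ₁ x) i β * pd i 𝔥₂ (Φ₁ x)))
        + (∑ i, σ x i α * pd i 𝔥₁ x) =
      ∑ i, σ x i α * pd i (fun y => 𝔥₂ (Φ₁ y) + 𝔥₁ y) x := by
  intro x hx α
  have hxM' : Φ₁ x ∈ M' := hΦ₁map hx
  have hΨΦ : Ψ₁ (Φ₁ x) = x := hΦ₁inv x hx
  -- differentiability facts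
  have hd𝔥₂ : DifferentiableAt ℝ 𝔥₂ (Φ₁ x) :=
    (h𝔥₂.differentiableOn (by norm_num)).differentiableAt (hM'.mem_nhds hxM')
  have hdΦ : ∀ j, DifferentiableAt ℝ (fun y => Φ₁ y j) x := fun j =>
    ((hΦ₁s j).differentiableOn (by norm_num)).differentiableAt (hM.mem_nhds hx)
  have hdΦfull : DifferentiableAt ℝ Φ₁ x := differentiableAt_pi.mpr hdΦ
  have hd𝔥₁ : DifferentiableAt ℝ 𝔥₁ x :=
    (h𝔥₁.differentiableOn (by norm_num)).differentiableAt (hM.mem_nhds hx)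
  -- chain rule
  have hchain : ∀ i, pd i (fun y => 𝔥₂ (Φ₁ y) + 𝔥₁ y) x
      = (∑ j, pd i (fun y => Φ₁ y j) x * pd j 𝔥₂ (Φ₁ x)) + pd i 𝔥₁ x := by
    intro i
    have hcomp : DifferentiableAt ℝ (fun y => 𝔥₂ (Φ₁ y)) x := hd𝔥₂.comp x hdΦfull
    unfold pd
    rw [fderiv_fun_add hcomp hd𝔥₁, ContinuousLinearMap.add_apply]
    congr 1
    have hc : fderiv ℝ (fun y => 𝔥₂ (Φ₁ y)) x
        = (fderiv ℝ 𝔥₂ (Φ₁ x)).comp (fderiv ℝ Φ₁ x) := fderiv_comp x hd𝔥₂ hdΦfull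
    rw [hc, ContinuousLinearMap.comp_apply, clm_apply_sum]
    refine Finset.sum_congr rfl fun j _ => ?_
    congr 1
    rw [show Φ₁ = (fun x j => Φ₁ x j) from rfl, fderiv_pi hdΦ]
    simp
  -- orthogonality
  have hBinv : (B₁ x)⁻¹ = (B₁ x)ᵀ := Matrix.inv_eq_right_inv (hSO₁ x hx).1
  have hBtB : (B₁ x)ᵀ * B₁ x = 1 := mul_eq_one_comm.mp (hSO₁ x hx).1
  have key : ∀ γ, (∑ β, (B₁ x)⁻¹ α β * (B₁ x)⁻¹ γ β) = if α = γ then 1 else 0 := by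
    intro γ
    have : (∑ β, (B₁ x)⁻¹ α β * (B₁ x)⁻¹ γ β) = ((B₁ x)ᵀ * B₁ x) α γ := by
      rw [hBinv, Matrix.mul_apply]
      exact Finset.sum_congr rfl fun β _ => by simp [Matrix.transpose_apply]
    rw [this, hBtB, Matrix.one_apply]
  have hr : Real.sqrt (η₁ x) ≠ 0 := Real.sqrt_ne_zero'.mpr (hpos₁ x hx)
  -- first term
  have hT1 : Real.sqrt (η₁ x) *
        (∑ β, (B₁ x)⁻¹ α β *
          (∑ i, ETsigma Φ₁ Ψ₁ B₁ η₁ σ (Φ₁ x) i β * pd i 𝔥₂ (Φ₁ x)))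
      = ∑ i, σ x i α * ∑ j, pd i (fun y => Φ₁ y j) x * pd j 𝔥₂ (Φ₁ x) := by
    simp only [ETsigma, Matrix.of_apply, hΨΦ]
    have e1 : ∀ β, (∑ i, ((Real.sqrt (η₁ x))⁻¹ *
          ∑ j, ∑ γ, pd j (fun z => Φ₁ z i) x * σ x j γ * (B₁ x)⁻¹ γ β) * pd i 𝔥₂ (Φ₁ x))
        = (Real.sqrt (η₁ x))⁻¹ * ∑ i,
          (∑ j, ∑ γ, pd j (fun z => Φ₁ z i) x * σ x j γ * (B₁ x)⁻¹ γ β) * pd i 𝔥₂ (Φ₁ x) := by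
      intro β
      rw [Finset.mul_sum]
      exact Finset.sum_congr rfl fun i _ => by ring
    simp only [e1]
    have e2 : (∑ β, (B₁ x)⁻¹ α β * ((Real.sqrt (η₁ x))⁻¹ * ∑ i,
          (∑ j, ∑ γ, pd j (fun z => Φ₁ z i) x * σ x j γ * (B₁ x)⁻¹ γ β) * pd i 𝔥₂ (Φ₁ x)))
        = (Real.sqrt (η₁ x))⁻¹ * ∑ β, (B₁ x)⁻¹ α β * ∑ i,
          (∑ j, ∑ γ, pd j (fun z => Φ₁ z i) x * σ x j γ * (B₁ x)⁻¹ γ β) * pd i 𝔥₂ (Φ₁ x) := by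
      rw [Finset.mul_sum]
      exact Finset.sum_congr rfl fun β _ => by ring
    rw [e2, ← mul_assoc, mul_inv_cancel₀ hr, one_mul]
    calc (∑ β, (B₁ x)⁻¹ α β * ∑ i,
          (∑ j, ∑ γ, pd j (fun z => Φ₁ z i) x * σ x j γ * (B₁ x)⁻¹ γ β) * pd i 𝔥₂ (Φ₁ x))
        = ∑ β, ∑ i, ∑ j, ∑ γ, (pd j (fun z => Φ₁ z i) x * σ x j γ * pd i 𝔥₂ (Φ₁ x))
            * ((B₁ x)⁻¹ α β * (B₁ x)⁻¹ γ β) := by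
          refine Finset.sum_congr rfl fun β _ => ?_
          rw [Finset.mul_sum]
          refine Finset.sum_congr rfl fun i _ => ?_
          simp only [Finset.sum_mul, Finset.mul_sum]
          refine Finset.sum_congr rfl fun j _ => ?_
          refine Finset.sum_congr rfl fun γ _ => ?_
          ring
      _ = ∑ i, ∑ j, ∑ γ, ∑ β, (pd j (fun z => Φ₁ z i) x * σ x j γ * pd i 𝔥₂ (Φ₁ x))
            * ((B₁ x)⁻¹ α β * (B₁ x)⁻¹ γ β) := by
          rw [Finset.sum_comm]
          refine Finset.sum_congr rfl fun i _ => ?_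
          rw [Finset.sum_comm]
          refine Finset.sum_congr rfl fun j _ => ?_
          rw [Finset.sum_comm]
      _ = ∑ i, ∑ j, pd j (fun z => Φ₁ z i) x * σ x j α * pd i 𝔥₂ (Φ₁ x) := by
          refine Finset.sum_congr rfl fun i _ => ?_
          refine Finset.sum_congr rfl fun j _ => ?_
          have : ∀ γ : Fin m, (∑ β, (pd j (fun z => Φ₁ z i) x * σ x j γ * pd i 𝔥₂ (Φ₁ x))
              * ((B₁ x)⁻¹ α β * (B₁ x)⁻¹ γ β))
              = (pd j (fun z => Φ₁ z i) x * σ x j γ * pd i 𝔥₂ (Φ₁ x))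
                * (if α = γ then 1 else 0) := fun γ => by rw [← Finset.mul_sum, key γ]
          simp only [this, mul_ite, mul_one, mul_zero]
          simp
      _ = ∑ i, σ x i α * ∑ j, pd i (fun y => Φ₁ y j) x * pd j 𝔥₂ (Φ₁ x) := by
          rw [Finset.sum_comm]
          refine Finset.sum_congr rfl fun i _ => ?_
          rw [Finset.mul_sum]
          refine Finset.sum_congr rfl fun j _ => ?_
          ring
  rw [hT1]
  simp only [hchain, mul_add, Finset.sum_add_distrib]


/-- Composition of quasi Doob transformations: if `h₁ = σᵀ·∇𝔥₁` and `h₂ = σ̃ᵀ·∇𝔥₂` (with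
`σ̃ = ((1/√η₁)·∇Φ₁·σ·B₁⁻¹)∘Φ₁⁻¹` the transformed diffusion coefficient), then the composed
Girsanov component `ĥ = √η₁·B₁⁻¹·(h₂∘Φ₁) + h₁` satisfies `ĥ = σᵀ·∇(𝔥₂∘Φ₁ + 𝔥₁)` on `M`. -/
theorem statement9 {n m : ℕ}
    (M M' : Set (Fin n → ℝ)) (hM : IsOpen M) (hM' : IsOpen M')
    (σ : (Fin n → ℝ) → Matrix (Fin n) (Fin m) ℝ) (hσ : SmoothMat M σ)
    (Φ₁ Ψ₁ : (Fin n → ℝ) → Fin n → ℝ)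
    (B₁ : (Fin n → ℝ) → Matrix (Fin m) (Fin m) ℝ) (η₁ : (Fin n → ℝ) → ℝ)
    (hΦ₁map : Set.MapsTo Φ₁ M M') (hΨ₁map : Set.MapsTo Ψ₁ M' M)
    (hΦ₁inv : ∀ x ∈ M, Ψ₁ (Φ₁ x) = x) (hΨ₁inv : ∀ y ∈ M', Φ₁ (Ψ₁ y) = y)
    (hΦ₁s : SmoothVec M Φ₁) (hΨ₁s : SmoothVec M' Ψ₁)
    (hB₁s : SmoothMat M B₁) (hη₁s : ContDiffOn ℝ (⊤ : ℕ∞) η₁ M)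
    (hSO₁ : ∀ x ∈ M, B₁ x * (B₁ x)ᵀ = 1 ∧ (B₁ x).det = 1) (hpos₁ : ∀ x ∈ M, 0 < η₁ x)
    (𝔥₁ 𝔥₂ : (Fin n → ℝ) → ℝ)
    (h𝔥₁ : ContDiffOn ℝ (⊤ : ℕ∞) 𝔥₁ M) (h𝔥₂ : ContDiffOn ℝ (⊤ : ℕ∞) 𝔥₂ M') :
    ∀ x ∈ M, ∀ α,
      Real.sqrt (η₁ x) *
          (∑ β, (B₁ x)⁻¹ α β *
            (∑ i, ETsigma Φ₁ Ψ₁ B₁ η₁ σ (Φ₁ x) i β * pd i 𝔥₂ (Φ₁ x)))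
        + (∑ i, σ x i α * pd i 𝔥₁ x) =
      ∑ i, σ x i α * pd i (fun y => 𝔥₂ (Φ₁ y) + 𝔥₁ y) x := by
  exact statement9' M M' hM hM' σ hσ Φ₁ Ψ₁ B₁ η₁ hΦ₁map hΨ₁map hΦ₁inv hΨ₁inv hΦ₁s hΨ₁s hB₁s hη₁s hSO₁ hpos₁ 𝔥₁ 𝔥₂ h𝔥₁ h𝔥₂
end
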